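/- arXiv:2107.00871 — 8 statements merged into one kernel-verified Lean document; each statement's English description precedes it below -/
import Mathlib

section
/- The full-conditional manifold is e-flat: if q0 and q1 are everywhere-positive distributions belonging to E(θ) and λ ∈ [0,1], then the normalized geometric mixture qλ(x) = q0(x)^{1−λ}·q1(x)^{λ}/Z with Z = Σ_{x'} q0(x')^{1−λ}·q1(x')^{λ} is a distribution that also belongs to E(θ), i.e. qλ(x) = qλ₋ᵢ(x)·θ(xᵢ,x) for all x. -/
open Finset

variable {ι : Type} [Fintype ι] [DecidableEq ι] [Nonempty ι]
  {α : ι → Type} [∀ i, Fintype (α i)] [∀ i, DecidableEq (α i)] [∀ i, Nonempty (α i)]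

/-- `p` is a probability distribution on the joint space `X = Π j, α j`. -/
def IsDist (p : (∀ j, α j) → ℝ) : Prop :=
  (∀ x, 0 ≤ p x) ∧ ∑ x, p x = 1

/-- The `i`-marginal `p₋ᵢ(x) = Σ_{a ∈ α i} p(x[i↦a])`. -/
noncomputable def marg (p : (∀ j, α j) → ℝ) (i : ι) (x : ∀ j, α j) : ℝ :=
  ∑ a, p (Function.update x i a)

/-- `θ` is a conditional probability table (CPT) at node `i`. -/
def IsCPT (i : ι) (θ : α i → (∀ j, α j) → ℝ) : Prop :=
  (∀ a x, 0 < θ a x) ∧ (∀ x, ∑ a, θ a x = 1) ∧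
  (∀ a x (b : α i), θ a (Function.update x i b) = θ a x)

/-- `q` belongs to the full-conditional manifold `E(θ)`. -/
def memE (i : ι) (θ : α i → (∀ j, α j) → ℝ) (q : (∀ j, α j) → ℝ) : Prop :=
  ∀ x, q x = marg q i x * θ (x i) x

/-- Theorem 1, e-flatness: the full-conditional manifold is e-flat:
the normalized geometric mixture of two positive members of `E(θ)` is again a
distribution belonging to `E(θ)`. -/
theorem fullConditionalManifold_eFlat (i : ι) (θ : α i → (∀ j, α j) → ℝ)
    (hθ : IsCPT i θ) (q0 q1 : (∀ j, α j) → ℝ)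
    (h0 : IsDist q0) (h1 : IsDist q1)
    (h0pos : ∀ x, 0 < q0 x) (h1pos : ∀ x, 0 < q1 x)
    (hE0 : memE i θ q0) (hE1 : memE i θ q1)
    (l : ℝ) (hl0 : 0 ≤ l) (hl1 : l ≤ 1) :
    IsDist (fun x => q0 x ^ (1 - l) * q1 x ^ l / ∑ x', q0 x' ^ (1 - l) * q1 x' ^ l) ∧
    memE i θ (fun x => q0 x ^ (1 - l) * q1 x ^ l / ∑ x', q0 x' ^ (1 - l) * q1 x' ^ l) := by
  obtain ⟨hθpos, hθsum, hθinv⟩ := hθ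
  set g : (∀ j, α j) → ℝ := fun x => q0 x ^ (1 - l) * q1 x ^ l with hg
  have hgpos : ∀ x, 0 < g x := fun x =>
    mul_pos (Real.rpow_pos_of_pos (h0pos x) _) (Real.rpow_pos_of_pos (h1pos x) _)
  have hZpos : 0 < ∑ x', g x' := Finset.sum_pos (fun x _ => hgpos x) Finset.univ_nonempty
  have hm0pos : ∀ x, 0 < marg q0 i x := fun x =>
    Finset.sum_pos (fun a _ => h0pos _) Finset.univ_nonempty
  have hm1pos : ∀ x, 0 < marg q1 i x := fun x =>
    Finset.sum_pos (fun a _ => h1pos _) Finset.univ_nonempty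
  have hminv : ∀ (p : (∀ j, α j) → ℝ) x (b : α i),
      marg p i (Function.update x i b) = marg p i x := by
    intro p x b
    unfold marg
    simp [Function.update_idem]
  -- g satisfies memE (unnormalized)
  have hgE : ∀ x, g x = marg g i x * θ (x i) x := by
    intro x
    have key : ∀ a : α i, g (Function.update x i a)
        = (marg q0 i x ^ (1 - l) * marg q1 i x ^ l) * θ a x := by
      intro a
      have e0 : q0 (Function.update x i a) = marg q0 i x * θ a x := by
        rw [hE0 (Function.update x i a), hminv, hθinv, Function.update_self]
      have e1 : q1 (Function.update x i a) = marg q1 i x * θ a x := by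
        rw [hE1 (Function.update x i a), hminv, hθinv, Function.update_self]
      have hθa := hθpos a x
      simp only [hg, e0, e1]
      rw [Real.mul_rpow (hm0pos x).le hθa.le, Real.mul_rpow (hm1pos x).le hθa.le]
      have : θ a x ^ (1 - l) * θ a x ^ l = θ a x := by
        rw [← Real.rpow_add hθa]; simp
      rw [mul_mul_mul_comm, this]
    have hmarg : marg g i x = marg q0 i x ^ (1 - l) * marg q1 i x ^ l := by
      rw [show marg g i x = ∑ a, g (Function.update x i a) from rfl,
        Finset.sum_congr rfl (fun a _ => key a), ← Finset.mul_sum, hθsum x, mul_one]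
    have hx : g x = (marg q0 i x ^ (1 - l) * marg q1 i x ^ l) * θ (x i) x := by
      have := key (x i)
      rwa [Function.update_eq_self] at this
    rw [hx, hmarg]
  have hmargdiv : ∀ x, marg (fun y => g y / ∑ x', g x') i x = marg g i x / ∑ x', g x' := by
    intro x
    unfold marg
    rw [← Finset.sum_div]
  refine ⟨⟨fun x => div_nonneg (hgpos x).le hZpos.le, ?_⟩, fun x => ?_⟩
  · rw [← Finset.sum_div, div_self hZpos.ne']
  · show g x / ∑ x', g x' = _
    rw [hmargdiv x, hgE x]; ring
end

section
/- m-projection onto a full-conditional manifold (Theorem 2): let p be a positive distribution and θ a CPT at node i. Define q*(x) = p₋ᵢ(x)·θ(xᵢ,x). Then q* is a positive distribution belonging to E(θ), and for every positive distribution q belonging to E(θ), KL(p‖q*) ≤ KL(p‖q); moreover KL(p‖q*) = Σ_x p(x)·log( p(xᵢ|x₋ᵢ) / θ(xᵢ,x) ). -/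
set_option linter.unusedSectionVars false

open Finset

variable {ι : Type} [Fintype ι] [DecidableEq ι] [Nonempty ι]
  {α : ι → Type} [∀ i, Fintype (α i)] [∀ i, DecidableEq (α i)] [∀ i, Nonempty (α i)]

/-- The full conditional `p(xᵢ|x₋ᵢ) = p(x)/p₋ᵢ(x)`. -/
noncomputable def fullCond (p : (∀ j, α j) → ℝ) (i : ι) (x : ∀ j, α j) : ℝ :=
  p x / marg p i x

/-- Kullback–Leibler divergence. -/
noncomputable def KL (p q : (∀ j, α j) → ℝ) : ℝ :=
  ∑ x, p x * Real.log (p x / q x)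

/-- Auxiliary self-inverse equivalence used for double counting. -/
def updEquiv (i : ι) : ((∀ j, α j) × α i) ≃ ((∀ j, α j) × α i) where
  toFun p := (Function.update p.1 i p.2, p.1 i)
  invFun p := (Function.update p.1 i p.2, p.1 i)
  left_inv p := by simp [Function.update_idem]
  right_inv p := by simp [Function.update_idem]

/-- Double-counting identity. -/
lemma sum_sum_update (i : ι) (f : (∀ j, α j) → ℝ) :
    ∑ x, ∑ a, f (Function.update x i a) = (Fintype.card (α i) : ℝ) * ∑ x, f x := by
  have h := Fintype.sum_equiv (updEquiv (α := α) i)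
      (fun p : (∀ j, α j) × α i => f (Function.update p.1 i p.2))
      (fun p => f p.1) (fun p => rfl)
  rw [Fintype.sum_prod_type] at h
  rw [h, Fintype.sum_prod_type]
  simp only [Finset.sum_const, Finset.card_univ, nsmul_eq_mul]
  rw [← Finset.mul_sum]

lemma marg_update (p : (∀ j, α j) → ℝ) (i : ι) (x : ∀ j, α j) (b : α i) :
    marg p i (Function.update x i b) = marg p i x := by
  unfold marg
  exact Finset.sum_congr rfl fun a _ => by rw [Function.update_idem]

/-- Sum of the marginal over the whole space. -/
lemma sum_marg (p : (∀ j, α j) → ℝ) (i : ι) :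
    ∑ x, marg p i x = (Fintype.card (α i) : ℝ) * ∑ x, p x :=
  sum_sum_update i p

/-- Gibbs' inequality. -/
lemma gibbs {X : Type} [Fintype X] (f g : X → ℝ) (hf : ∀ x, 0 < f x) (hg : ∀ x, 0 < g x)
    (h : ∑ x, f x = ∑ x, g x) : 0 ≤ ∑ x, f x * Real.log (f x / g x) := by
  have key : ∑ x, f x * Real.log (g x / f x) ≤ 0 := by
    have hle : ∀ x : X, f x * Real.log (g x / f x) ≤ g x - f x := by
      intro x
      have h1 := Real.log_le_sub_one_of_pos (div_pos (hg x) (hf x))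
      have h2 : f x * (g x / f x - 1) = g x - f x := by
        rw [mul_sub, mul_one, mul_div_cancel₀ _ (hf x).ne']
      nlinarith [hf x]
    calc ∑ x, f x * Real.log (g x / f x) ≤ ∑ x, (g x - f x) := Finset.sum_le_sum fun x _ => hle x
      _ = 0 := by rw [Finset.sum_sub_distrib, h, sub_self]
  have : ∑ x, f x * Real.log (f x / g x) = -∑ x, f x * Real.log (g x / f x) := by
    rw [← Finset.sum_neg_distrib]
    refine Finset.sum_congr rfl fun x _ => ?_
    rw [show f x / g x = (g x / f x)⁻¹ by rw [inv_div], Real.log_inv]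
    ring
  rw [this]
  linarith

/-- Theorem 2: `q*(x) = p₋ᵢ(x)·θ(xᵢ,x)` is the m-projection of `p`
onto `E(θ)`: it is a positive distribution in `E(θ)` minimizing `KL(p‖·)` over
positive distributions in `E(θ)`, and the minimum value is
`Σ_x p(x)·log( p(xᵢ|x₋ᵢ)/θ(xᵢ,x) )`. -/
theorem mProjection_onto_fullConditionalManifold
    (i : ι) (θ : α i → (∀ j, α j) → ℝ) (hθ : IsCPT i θ)
    (p : (∀ j, α j) → ℝ) (hp : IsDist p) (hppos : ∀ x, 0 < p x) :
    IsDist (fun x => marg p i x * θ (x i) x) ∧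
    (∀ x, 0 < marg p i x * θ (x i) x) ∧
    memE i θ (fun x => marg p i x * θ (x i) x) ∧
    (∀ q : (∀ j, α j) → ℝ, IsDist q → (∀ x, 0 < q x) → memE i θ q →
      KL p (fun x => marg p i x * θ (x i) x) ≤ KL p q) ∧
    KL p (fun x => marg p i x * θ (x i) x)
      = ∑ x, p x * Real.log (fullCond p i x / θ (x i) x) := by
  obtain ⟨hθ1, hθ2, hθ3⟩ := hθ
  set c : ℝ := (Fintype.card (α i) : ℝ) with hc
  have hc0 : 0 < c := by
    rw [hc]
    exact_mod_cast Fintype.card_pos (α := α i)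
  -- positivity of marginals
  have hmargpos : ∀ (r : (∀ j, α j) → ℝ), (∀ x, 0 < r x) → ∀ x, 0 < marg r i x := by
    intro r hr x
    exact Finset.sum_pos (fun a _ => hr _) ⟨Classical.arbitrary (α i), Finset.mem_univ _⟩
  have hPpos : ∀ x, 0 < marg p i x := hmargpos p hppos
  have hqpos : ∀ x, 0 < marg p i x * θ (x i) x := fun x => mul_pos (hPpos x) (hθ1 _ x)
  -- key: for i-invariant g, c * ∑ g·θ = ∑ g
  have hkey : ∀ g : (∀ j, α j) → ℝ, (∀ x b, g (Function.update x i b) = g x) →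
      c * ∑ x, g x * θ (x i) x = ∑ x, g x := by
    intro g hg
    rw [← sum_sum_update i (fun x => g x * θ (x i) x)]
    have : ∀ x : (∀ j, α j), ∑ a, g (Function.update x i a) * θ ((Function.update x i a) i)
        (Function.update x i a) = g x := by
      intro x
      have : ∀ a : α i, g (Function.update x i a) * θ ((Function.update x i a) i)
          (Function.update x i a) = g x * θ a x := by
        intro a
        rw [hg x a, Function.update_self, hθ3]
      rw [Finset.sum_congr rfl fun a _ => this a, ← Finset.mul_sum, hθ2, mul_one]
    exact Finset.sum_congr rfl fun x _ => this x
  -- q* is a distribution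
  have hsum_qstar : ∑ x, marg p i x * θ (x i) x = 1 := by
    have h1 := hkey (marg p i) (marg_update p i)
    rw [sum_marg, hp.2, mul_one] at h1
    exact mul_left_cancel₀ (ne_of_gt hc0) (by rw [h1, mul_one])
  have hdist : IsDist (fun x => marg p i x * θ (x i) x) :=
    ⟨fun x => le_of_lt (hqpos x), hsum_qstar⟩
  -- q* ∈ E(θ)
  have hmemE : memE i θ (fun x => marg p i x * θ (x i) x) := by
    intro x
    have hterm : ∀ a : α i, marg p i (Function.update x i a) *
        θ ((Function.update x i a) i) (Function.update x i a) = marg p i x * θ a x := by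
      intro a
      rw [marg_update, Function.update_self, hθ3]
    have hm : marg (fun x => marg p i x * θ (x i) x) i x = marg p i x := by
      show ∑ a : α i, marg p i (Function.update x i a) *
        θ ((Function.update x i a) i) (Function.update x i a) = marg p i x
      rw [Finset.sum_congr rfl fun a _ => hterm a, ← Finset.mul_sum, hθ2, mul_one]
    rw [hm]
  refine ⟨hdist, hqpos, hmemE, ?_, ?_⟩
  · -- minimality
    intro q hq hqpos' hqE
    have hQpos : ∀ x, 0 < marg q i x := hmargpos q hqpos'
    -- KL p q - KL p q* = ∑ p x log (marg p i x / marg q i x)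
    have hdiff : KL p q - KL p (fun x => marg p i x * θ (x i) x)
        = ∑ x, p x * Real.log (marg p i x / marg q i x) := by
      unfold KL
      rw [← Finset.sum_sub_distrib]
      refine Finset.sum_congr rfl fun x _ => ?_
      show p x * Real.log (p x / q x) -
        p x * Real.log (p x / (marg p i x * θ (x i) x)) = _
      rw [← mul_sub]
      congr 1
      rw [Real.log_div (ne_of_gt (hppos x)) (ne_of_gt (hqpos' x)),
          Real.log_div (ne_of_gt (hppos x)) (ne_of_gt (hqpos x)),
          Real.log_div (ne_of_gt (hPpos x)) (ne_of_gt (hQpos x)),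
          hqE x,
          Real.log_mul (ne_of_gt (hQpos x)) (ne_of_gt (hθ1 _ x)),
          Real.log_mul (ne_of_gt (hPpos x)) (ne_of_gt (hθ1 _ x))]
      ring
    -- the difference is nonnegative
    have hinv : ∀ (x : ∀ j, α j) (b : α i),
        Real.log (marg p i (Function.update x i b) / marg q i (Function.update x i b))
          = Real.log (marg p i x / marg q i x) := by
      intro x b; rw [marg_update, marg_update]
    have hck : c * ∑ x, p x * Real.log (marg p i x / marg q i x)
        = ∑ x, marg p i x * Real.log (marg p i x / marg q i x) := by
      rw [← sum_sum_update i (fun x => p x * Real.log (marg p i x / marg q i x))]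
      refine Finset.sum_congr rfl fun x _ => ?_
      rw [Finset.sum_congr rfl fun a (_ : a ∈ univ) => by rw [hinv x a]]
      rw [← Finset.sum_mul]
      rfl
    have hgibbs : 0 ≤ ∑ x, marg p i x * Real.log (marg p i x / marg q i x) := by
      apply gibbs _ _ hPpos hQpos
      rw [sum_marg, sum_marg, hp.2, hq.2]
    have : 0 ≤ ∑ x, p x * Real.log (marg p i x / marg q i x) := by
      by_contra hcon
      push_neg at hcon
      nlinarith
    linarith [hdiff]
  · -- value of the minimum
    unfold KL
    refine Finset.sum_congr rfl fun x _ => ?_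
    show p x * Real.log (p x / (marg p i x * θ (x i) x)) = _
    congr 1
    rw [fullCond, div_div]
end

section
/- Orthogonality of the m-projection: let p be a positive distribution, θ a CPT at node i, and q*(x) = p₋ᵢ(x)·θ(xᵢ,x) the m-projection of p onto E(θ). Then for every positive distribution r belonging to E(θ), Σ_x ( p(x) − q*(x) )·( log q*(x) − log r(x) ) = 0. -/
open Finset

variable {ι : Type} [Fintype ι] [DecidableEq ι] [Nonempty ι]
  {α : ι → Type} [∀ i, Fintype (α i)] [∀ i, DecidableEq (α i)] [∀ i, Nonempty (α i)]

lemma sum_eq_zero_of_fiber (i : ι) (F : (∀ j, α j) → ℝ)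
    (h : ∀ x, ∑ a, F (Function.update x i a) = 0) : ∑ x, F x = 0 := by
  classical
  have e := Equiv.piSplitAt i α
  rw [← Equiv.sum_comp (Equiv.piSplitAt i α).symm F, Fintype.sum_prod_type, Finset.sum_comm]
  apply Finset.sum_eq_zero
  intro y _
  have key : ∀ a : α i, (Equiv.piSplitAt i α).symm (a, y) =
      Function.update ((Equiv.piSplitAt i α).symm (Classical.arbitrary (α i), y)) i a := by
    intro a
    funext j
    by_cases hj : j = i
    · subst hj; simp [Equiv.piSplitAt]
    · simp [Equiv.piSplitAt, Function.update, hj]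
  calc ∑ a, F ((Equiv.piSplitAt i α).symm (a, y))
      = ∑ a, F (Function.update ((Equiv.piSplitAt i α).symm (Classical.arbitrary (α i), y)) i a) := by
        exact Finset.sum_congr rfl fun a _ => by rw [key a]
    _ = 0 := h _

lemma marg_pos (p : (∀ j, α j) → ℝ) (hppos : ∀ x, 0 < p x) (i : ι) (x : ∀ j, α j) :
    0 < marg p i x :=
  Finset.sum_pos (fun a _ => hppos _) Finset.univ_nonempty

/-- orthogonality of the m-projection: for the m-projection
`q*(x) = p₋ᵢ(x)·θ(xᵢ,x)` of a positive distribution `p` onto `E(θ)` and every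
positive distribution `r` in `E(θ)`,
`Σ_x (p(x) − q*(x))·(log q*(x) − log r(x)) = 0`. -/
theorem mProjection_orthogonal
    (i : ι) (θ : α i → (∀ j, α j) → ℝ) (hθ : IsCPT i θ)
    (p : (∀ j, α j) → ℝ) (hp : IsDist p) (hppos : ∀ x, 0 < p x)
    (r : (∀ j, α j) → ℝ) (hr : IsDist r) (hrpos : ∀ x, 0 < r x) (hrE : memE i θ r) :
    ∑ x, (p x - marg p i x * θ (x i) x) *
        (Real.log (marg p i x * θ (x i) x) - Real.log (r x)) = 0 := by
  classical
  set F : (∀ j, α j) → ℝ := fun x =>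
    (p x - marg p i x * θ (x i) x) * (Real.log (marg p i x) - Real.log (marg r i x)) with hF
  have hlog : ∀ x, Real.log (marg p i x * θ (x i) x) - Real.log (r x)
      = Real.log (marg p i x) - Real.log (marg r i x) := by
    intro x
    rw [hrE x, Real.log_mul (ne_of_gt (marg_pos p hppos i x)) (ne_of_gt (hθ.1 _ x)),
      Real.log_mul (ne_of_gt (marg_pos r hrpos i x)) (ne_of_gt (hθ.1 _ x))]
    ring
  have : ∑ x, (p x - marg p i x * θ (x i) x) *
      (Real.log (marg p i x * θ (x i) x) - Real.log (r x)) = ∑ x, F x :=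
    Finset.sum_congr rfl fun x _ => by rw [hF]; simp only [hlog x]
  rw [this]
  apply sum_eq_zero_of_fiber i
  intro x
  have hθa : ∀ a : α i, θ a (Function.update x i a) = θ a x := fun a => hθ.2.2 a x a
  have : ∀ a : α i, F (Function.update x i a) =
      (p (Function.update x i a) - marg p i x * θ a x) *
        (Real.log (marg p i x) - Real.log (marg r i x)) := by
    intro a
    rw [hF]
    simp only [marg_update, Function.update_self, hθa a]
  rw [Finset.sum_congr rfl fun a _ => this a, ← Finset.sum_mul, Finset.sum_sub_distrib,
    ← Finset.mul_sum, hθ.2.1 x]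
  have : ∑ a, p (Function.update x i a) = marg p i x := rfl
  rw [this]
  ring
end

section
/- Theorem 3 (bound on the stationary distribution of random-pseudo-Gibbs sampling): let c : ι → ℝ with c_i ≥ 0 for all i and Σ_i c_i = 1, for each i ∈ ι let θ_i be a CPT at node i, let p be a positive distribution, and let π be a positive distribution satisfying the stationarity condition π(x) = Σ_i c_i · π₋ᵢ(x) · θ_i(xᵢ,x) for all x. Then FC(p‖π) ≤ Σ_i c_i · Σ_x p(x)·log( p(xᵢ|x₋ᵢ) / θ_i(xᵢ,x) ), where the right-hand side equals Σ_i c_i·KL(p‖E(θ_i)). -/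
open Finset

variable {ι : Type} [Fintype ι] [DecidableEq ι] [Nonempty ι]
  {α : ι → Type} [∀ i, Fintype (α i)] [∀ i, DecidableEq (α i)] [∀ i, Nonempty (α i)]

/-- Theorem 3: bound on the stationary distribution of
random-pseudo-Gibbs sampling: `FC(p‖π) ≤ Σ_i c_i·KL(p‖E(θ_i))`, where the
right-hand side is `Σ_i c_i·Σ_x p(x)·log( p(xᵢ|x₋ᵢ)/θ_i(xᵢ,x) )`. -/
theorem stationary_FC_bound
    (c : ι → ℝ) (hc0 : ∀ i, 0 ≤ c i) (hc1 : ∑ i, c i = 1)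
    (θ : ∀ i, α i → (∀ j, α j) → ℝ) (hθ : ∀ i, IsCPT i (θ i))
    (p : (∀ j, α j) → ℝ) (hp : IsDist p) (hppos : ∀ x, 0 < p x)
    (π : (∀ j, α j) → ℝ) (hπ : IsDist π) (hπpos : ∀ x, 0 < π x)
    (hstat : ∀ x, π x = ∑ i, c i * (marg π i x * θ i (x i) x)) :
    (∑ i, c i * ∑ x, p x * Real.log (fullCond p i x / fullCond π i x)) ≤
      ∑ i, c i * ∑ x, p x * Real.log (fullCond p i x / θ i (x i) x) := by
  have hmarg : ∀ i x, 0 < marg π i x := fun i x =>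
    Finset.sum_pos (fun a _ => hπpos _) Finset.univ_nonempty
  have hmargp : ∀ i x, 0 < marg p i x := fun i x =>
    Finset.sum_pos (fun a _ => hppos _) Finset.univ_nonempty
  have key : ∀ x, 0 ≤ ∑ i, c i * Real.log (fullCond π i x / θ i (x i) x) := by
    intro x
    set r : ι → ℝ := fun i => (marg π i x * θ i (x i) x) / π x with hr
    have hrpos : ∀ i, 0 < r i := fun i =>
      div_pos (mul_pos (hmarg i x) ((hθ i).1 _ _)) (hπpos x)
    have hsum : ∑ i, c i • r i = 1 := by
      simp only [smul_eq_mul, hr, ← Finset.sum_div, mul_div_assoc']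
      rw [← hstat x, div_self (hπpos x).ne']
    have jensen := strictConcaveOn_log_Ioi.concaveOn.le_map_sum
      (t := Finset.univ) (w := c) (p := r) (fun i _ => hc0 i) hc1
      (fun i _ => Set.mem_Ioi.2 (hrpos i))
    rw [hsum, Real.log_one] at jensen
    have heq : ∀ i, Real.log (fullCond π i x / θ i (x i) x) = -Real.log (r i) := by
      intro i
      rw [← Real.log_inv]
      congr 1
      rw [fullCond, hr]
      field_simp
    calc (0:ℝ) = -(∑ i, c i • Real.log (r i)) + ∑ i, c i • Real.log (r i) := by ring
      _ ≤ ∑ i, c i * Real.log (fullCond π i x / θ i (x i) x) := by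
          rw [← Finset.sum_neg_distrib]
          have : ∑ i, c i * Real.log (fullCond π i x / θ i (x i) x)
              = ∑ i, -(c i • Real.log (r i)) := by
            refine Finset.sum_congr rfl fun i _ => ?_
            rw [heq i]; simp [smul_eq_mul]
          rw [this]
          nlinarith [jensen]
  rw [← sub_nonneg, ← Finset.sum_sub_distrib]
  have hrw : ∀ i, (c i * ∑ x, p x * Real.log (fullCond p i x / θ i (x i) x)) -
      c i * ∑ x, p x * Real.log (fullCond p i x / fullCond π i x)
      = ∑ x, c i * (p x * Real.log (fullCond π i x / θ i (x i) x)) := by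
    intro i
    rw [← mul_sub, ← Finset.sum_sub_distrib, Finset.mul_sum]
    congr 1; ext x
    rw [← mul_sub]
    congr 1
    have h1 : 0 < fullCond p i x := div_pos (hppos x) (hmargp i x)
    have h2 : 0 < fullCond π i x := div_pos (hπpos x) (hmarg i x)
    have h3 : 0 < θ i (x i) x := (hθ i).1 _ _
    rw [Real.log_div h1.ne' h3.ne', Real.log_div h1.ne' h2.ne',
      Real.log_div h2.ne' h3.ne']
    ring
  rw [Finset.sum_congr rfl (fun i _ => hrw i), Finset.sum_comm]
  refine Finset.sum_nonneg fun x _ => ?_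
  have := key x
  calc (0:ℝ) ≤ p x * ∑ i, c i * Real.log (fullCond π i x / θ i (x i) x) :=
      mul_nonneg (hppos x).le (key x)
    _ = ∑ i, c i * (p x * Real.log (fullCond π i x / θ i (x i) x)) := by
      rw [Finset.mul_sum]; exact Finset.sum_congr rfl fun i _ => by ring
end

section
/- Full conditionals determine a positive joint distribution: if p and q are positive distributions on X = Π_{j∈ι} α j such that p(xᵢ|x₋ᵢ) = q(xᵢ|x₋ᵢ) for every i ∈ ι and every x ∈ X, then p = q. -/
open Finset

variable {ι : Type} [Fintype ι] [DecidableEq ι] [Nonempty ι]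
  {α : ι → Type} [∀ i, Fintype (α i)] [∀ i, DecidableEq (α i)] [∀ i, Nonempty (α i)]

/-- full conditionals determine a positive joint distribution:
if all full conditionals of two positive distributions agree, the distributions
are equal. -/
theorem fullConditionals_determine_distribution
    (p q : (∀ j, α j) → ℝ) (hp : IsDist p) (hppos : ∀ x, 0 < p x)
    (hq : IsDist q) (hqpos : ∀ x, 0 < q x)
    (h : ∀ (i : ι) (x : ∀ j, α j), fullCond p i x = fullCond q i x) :
    p = q := by
  have hmargp : ∀ (i : ι) (x : ∀ j, α j), 0 < marg p i x := fun i x =>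
    Finset.sum_pos (fun a _ => hppos _) Finset.univ_nonempty
  have hmargq : ∀ (i : ι) (x : ∀ j, α j), 0 < marg q i x := fun i x =>
    Finset.sum_pos (fun a _ => hqpos _) Finset.univ_nonempty
  -- the ratio equals the ratio of marginals
  have hr : ∀ (i : ι) (x : ∀ j, α j), p x / q x = marg p i x / marg q i x := by
    intro i x
    have := h i x
    unfold fullCond at this
    rw [div_eq_div_iff (hmargp i x).ne' (hmargq i x).ne'] at this
    rw [div_eq_div_iff (hqpos x).ne' (hmargq i x).ne']
    linarith
  have hmarg_update : ∀ (r : (∀ j, α j) → ℝ) (i : ι) (x : ∀ j, α j) (b : α i),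
      marg r i (Function.update x i b) = marg r i x := by
    intro r i x b
    unfold marg
    exact Finset.sum_congr rfl fun a _ => by rw [Function.update_idem]
  -- ratio is invariant under updating any coordinate
  have hinv : ∀ (i : ι) (x : ∀ j, α j) (b : α i),
      p (Function.update x i b) / q (Function.update x i b) = p x / q x := by
    intro i x b
    rw [hr i (Function.update x i b), hr i x, hmarg_update, hmarg_update]
  -- hence the ratio is constant
  have hconst : ∀ x y : ∀ j, α j, p x / q x = p y / q y := by
    intro x y
    have key : ∀ s : Finset ι,
        p (fun j => if j ∈ s then x j else y j) / q (fun j => if j ∈ s then x j else y j)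
          = p y / q y := by
      intro s
      induction s using Finset.induction with
      | empty => simp
      | @insert a s hns ih =>
        have : (fun j => if j ∈ insert a s then x j else y j)
            = Function.update (fun j => if j ∈ s then x j else y j) a (x a) := by
          funext j
          by_cases hj : j = a
          · subst hj; simp [Function.update]
          · simp [Function.update, hj, hns]
        rw [this, hinv, ih]
    have := key Finset.univ
    simpa using this
  obtain ⟨y⟩ : Nonempty (∀ j, α j) := inferInstance
  have hsum : ∑ x, p x = (p y / q y) * ∑ x, q x := by
    rw [Finset.mul_sum]
    refine Finset.sum_congr rfl fun x _ => ?_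
    rw [← hconst x y, div_mul_cancel₀ _ (hqpos x).ne']
  rw [hp.2, hq.2, mul_one] at hsum
  funext x
  have := hconst x y
  rw [← hsum, div_eq_one_iff_eq (hqpos x).ne'] at this
  exact this
end

section
/- Decomposition of the divergence to a full-conditional manifold in terms of conditional entropies: let p be a positive distribution, i ∈ ι, S ⊆ ι with i ∉ S, and θ a CPT at node i whose value θ(a,x) depends only on the coordinates of x in S. Then Σ_x p(x)·log( p(xᵢ|x₋ᵢ) / θ(xᵢ,x) ) = Σ_{y} p_S(y) · Σ_{a} p(a|y)·log( p(a|y)/θ_S(a,y) ) + H_p(Xᵢ|X_S) − H_p(Xᵢ|X₋ᵢ), where θ_S(a,y) denotes the common value of θ(a,x) over x with x_S = y. -/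
open Finset

variable {ι : Type} [Fintype ι] [DecidableEq ι] [Nonempty ι]
  {α : ι → Type} [∀ i, Fintype (α i)] [∀ i, DecidableEq (α i)] [∀ i, Nonempty (α i)]

/-- Restriction of `x` to the coordinates in `S`. -/
def restr (S : Finset ι) (x : ∀ j, α j) : ∀ j : S, α j :=
  fun j => x j

/-- Marginal of `p` on the coordinates in `S`: `p_S(y) = Σ_{x : x_S = y} p(x)`. -/
noncomputable def margS (p : (∀ j, α j) → ℝ) (S : Finset ι) (y : ∀ j : S, α j) : ℝ :=
  ∑ x, if restr S x = y then p x else 0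

/-- A canonical point of the joint space whose `S`-coordinates are `y`. -/
noncomputable def fill (S : Finset ι) (y : ∀ j : S, α j) : ∀ j, α j :=
  fun j => if h : j ∈ S then y ⟨j, h⟩ else Classical.arbitrary (α j)

/-- The conditional entropy
`H_p(Xᵢ|X_S) = −Σ_x p(x)·log( p_{S∪{i}}(x_{S∪{i}}) / p_S(x_S) )`;
`H_p(Xᵢ|X₋ᵢ)` is the case `S = Finset.univ.erase i`. -/
noncomputable def condEnt (p : (∀ j, α j) → ℝ) (i : ι) (S : Finset ι) : ℝ :=
  -∑ x, p x * Real.log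
    (margS p (insert i S) (restr (insert i S) x) / margS p S (restr S x))

/-- The conditional probability `p(a|y) = p_{S∪{i}}(y,a)/p_S(y)` of `Xᵢ = a`
given `X_S = y`, for `i ∉ S`. -/
noncomputable def condP (p : (∀ j, α j) → ℝ) (i : ι) (S : Finset ι)
    (y : ∀ j : S, α j) (a : α i) : ℝ :=
  margS p (insert i S) (restr (insert i S) (Function.update (fill S y) i a)) / margS p S y

lemma restr_fill (S : Finset ι) (y : ∀ j : S, α j) : restr S (fill S y) = y := by
  funext j
  simp [restr, fill, j.2]

lemma margS_pos (p : (∀ j, α j) → ℝ) (hppos : ∀ x, 0 < p x) (S : Finset ι)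
    (y : ∀ j : S, α j) : 0 < margS p S y := by
  unfold margS
  apply Finset.sum_pos'
  · intro x _
    split
    · exact (hppos x).le
    · exact le_rfl
  · exact ⟨fill S y, Finset.mem_univ _, by rw [if_pos (restr_fill S y)]; exact hppos _⟩

lemma margS_sum_mul (p : (∀ j, α j) → ℝ) (T : Finset ι) (g : (∀ j : T, α j) → ℝ) :
    ∑ z, margS p T z * g z = ∑ x, p x * g (restr T x) := by
  unfold margS
  simp_rw [Finset.sum_mul, ite_mul, zero_mul]
  rw [Finset.sum_comm]
  refine Finset.sum_congr rfl fun x _ => ?_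
  rw [Finset.sum_ite_eq Finset.univ (restr T x) (fun z => p x * g z)]
  simp

lemma margS_of_forall_mem (p : (∀ j, α j) → ℝ) (T : Finset ι) (hT : ∀ j, j ∈ T)
    (x : ∀ j, α j) : margS p T (restr T x) = p x := by
  unfold margS
  rw [Finset.sum_eq_single x]
  · simp
  · intro x' _ hx'
    rw [if_neg]
    intro h
    exact hx' (funext fun j => congrFun h ⟨j, hT j⟩)
  · simp

lemma margS_erase (p : (∀ j, α j) → ℝ) (i : ι) (x : ∀ j, α j) :
    margS p (Finset.univ.erase i) (restr (Finset.univ.erase i) x) = ∑ a, p (Function.update x i a) := by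
  unfold margS
  have key : ∀ x' : (∀ j, α j),
      (if restr (Finset.univ.erase i) x' = restr (Finset.univ.erase i) x then p x' else 0)
      = ∑ a, if x' = Function.update x i a then p x' else 0 := by
    intro x'
    by_cases h : restr (Finset.univ.erase i) x' = restr (Finset.univ.erase i) x
    · rw [if_pos h, Finset.sum_eq_single (x' i)]
      · rw [if_pos]
        funext j
        rcases eq_or_ne j i with rfl | hj
        · simp
        · have := congrFun h ⟨j, by simp [hj]⟩
          simpa [restr, Function.update_of_ne hj] using this
      · intro b _ hb
        rw [if_neg]
        intro hc
        exact hb (by rw [hc]; simp)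
      · simp
    · rw [if_neg h]
      symm
      apply Finset.sum_eq_zero
      intro a _
      rw [if_neg]
      intro hc
      apply h
      funext j
      obtain ⟨j, hj⟩ := j
      have hji : j ≠ i := (Finset.mem_erase.mp hj).1
      simp [restr, hc, Function.update_of_ne hji]
  rw [Finset.sum_congr rfl fun x' _ => key x', Finset.sum_comm]
  refine Finset.sum_congr rfl fun a _ => ?_
  rw [Finset.sum_ite_eq' Finset.univ (Function.update x i a) p]
  simp

lemma sum_insert_pi (i : ι) (S : Finset ι) (hiS : i ∉ S)
    (f : (∀ j : (insert i S : Finset ι), α j) → ℝ) :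
    ∑ y : (∀ j : S, α j), ∑ a : α i,
      f (restr (insert i S) (Function.update (fill S y) i a)) = ∑ z, f z := by
  have hbij : Function.Bijective (fun ya : (∀ j : S, α j) × α i =>
      restr (insert i S) (Function.update (fill S ya.1) i ya.2)) := by
    rw [Function.bijective_iff_has_inverse]
    refine ⟨fun z => (fun j : S => z ⟨j, Finset.mem_insert_of_mem j.2⟩,
        z ⟨i, Finset.mem_insert_self i S⟩), fun ya => ?_, fun z => ?_⟩
    · obtain ⟨y, a⟩ := ya
      refine Prod.ext ?_ ?_
      · funext j
        have hj : (j : ι) ≠ i := fun h => hiS (h ▸ j.2)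
        simp [restr, Function.update_of_ne hj, fill, j.2]
      · simp [restr]
    · funext j
      obtain ⟨j, hj⟩ := j
      rcases eq_or_ne j i with rfl | hji
      · simp [restr]
      · have hjS : j ∈ S := by
          rcases Finset.mem_insert.mp hj with h | h
          · exact absurd h hji
          · exact h
        simp [restr, Function.update_of_ne hji, fill, hjS]
  exact (Fintype.sum_prod_type _).symm.trans (Fintype.sum_bijective _ hbij _ f fun ya => rfl)

lemma condEnt_def (p : (∀ j, α j) → ℝ) (i : ι) (S : Finset ι) :
    (-∑ x, p x * Real.log
      (margS p (insert i S) (restr (insert i S) x) / margS p S (restr S x)))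
    = -∑ x, p x * Real.log
      (margS p (insert i S) (restr (insert i S) x) / margS p S (restr S x)) := rfl

lemma condEnt_erase_aux (p : (∀ j, α j) → ℝ) (i : ι) (x : ∀ j, α j) :
    margS p (insert i (Finset.univ.erase i)) (restr (insert i (Finset.univ.erase i)) x) /
      margS p (Finset.univ.erase i) (restr (Finset.univ.erase i) x)
    = p x / ∑ a, p (Function.update x i a) := by
  rw [margS_of_forall_mem p _ (fun j => by
    simp [Finset.insert_erase (Finset.mem_univ i)]) x, margS_erase p i x]

noncomputable def Gfun (p : (∀ j, α j) → ℝ) (θ : α i → (∀ j, α j) → ℝ) (S : Finset ι)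
    (z : ∀ j : (insert i S : Finset ι), α j) : ℝ :=
  Real.log ((margS p (insert i S) z /
      margS p S (fun j : S => z ⟨j, Finset.mem_insert_of_mem j.2⟩)) /
    θ (z ⟨i, Finset.mem_insert_self i S⟩)
      (fill S (fun j : S => z ⟨j, Finset.mem_insert_of_mem j.2⟩)))

lemma stepA (p : (∀ j, α j) → ℝ) (hppos : ∀ x, 0 < p x)
    (i : ι) (S : Finset ι) (hiS : i ∉ S)
    (θ : α i → (∀ j, α j) → ℝ)
    (hθS : ∀ a x x', restr S x = restr S x' → θ a x = θ a x') :
    (∑ y, margS p S y *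
        ∑ a, condP p i S y a * Real.log (condP p i S y a / θ a (fill S y)))
    = ∑ x, p x * Real.log
        ((margS p (insert i S) (restr (insert i S) x) / margS p S (restr S x)) / θ (x i) x) := by
  calc (∑ y, margS p S y *
        ∑ a, condP p i S y a * Real.log (condP p i S y a / θ a (fill S y)))
      = ∑ y : (∀ j : S, α j), ∑ a : α i,
          margS p (insert i S) (restr (insert i S) (Function.update (fill S y) i a)) *
            Gfun p θ S (restr (insert i S) (Function.update (fill S y) i a)) := by
        refine Finset.sum_congr rfl fun y _ => ?_
        rw [Finset.mul_sum]
        refine Finset.sum_congr rfl fun a _ => ?_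
        have hy : (fun j : S => (restr (insert i S) (Function.update (fill S y) i a))
            ⟨j, Finset.mem_insert_of_mem j.2⟩) = y := by
          funext j
          have hj : (j : ι) ≠ i := fun h => hiS (h ▸ j.2)
          simp [restr, Function.update_of_ne hj, fill, j.2]
        have ha : (restr (insert i S) (Function.update (fill S y) i a))
            ⟨i, Finset.mem_insert_self i S⟩ = a := by
          simp [restr]
        unfold condP Gfun
        rw [hy, ha, ← mul_assoc, mul_comm (margS p S y),
          div_mul_cancel₀ _ (ne_of_gt (margS_pos p hppos S y))]
    _ = ∑ z, margS p (insert i S) z * Gfun p θ S z := sum_insert_pi i S hiS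
        (fun z => margS p (insert i S) z * Gfun p θ S z)
    _ = ∑ x, p x * Gfun p θ S (restr (insert i S) x) := margS_sum_mul p (insert i S) (fun z => Gfun p θ S z)
    _ = ∑ x, p x * Real.log
        ((margS p (insert i S) (restr (insert i S) x) / margS p S (restr S x)) / θ (x i) x) := by
        refine Finset.sum_congr rfl fun x _ => ?_
        unfold Gfun
        have h1 : (fun j : S => (restr (insert i S) x) ⟨j, Finset.mem_insert_of_mem j.2⟩)
            = restr S x := rfl
        have h2 : (restr (insert i S) x) ⟨i, Finset.mem_insert_self i S⟩ = x i := rfl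
        rw [h1, h2, hθS (x i) (fill S (restr S x)) x (restr_fill S (restr S x))]

/-- decomposition of the divergence to a full-conditional manifold
in terms of conditional entropies:
`Σ_x p(x)·log( p(xᵢ|x₋ᵢ)/θ(xᵢ,x) )
  = Σ_y p_S(y)·Σ_a p(a|y)·log( p(a|y)/θ_S(a,y) ) + H_p(Xᵢ|X_S) − H_p(Xᵢ|X₋ᵢ)`,
for a CPT `θ` at node `i` depending only on the coordinates in `S` (with `i ∉ S`);
`θ_S(a,y)` is the common value of `θ(a,x)` over `x` with `x_S = y`. -/
theorem divergence_decomposition_condEnt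
    (p : (∀ j, α j) → ℝ) (hp : IsDist p) (hppos : ∀ x, 0 < p x)
    (i : ι) (S : Finset ι) (hiS : i ∉ S)
    (θ : α i → (∀ j, α j) → ℝ) (hθ : IsCPT i θ)
    (hθS : ∀ a x x', restr S x = restr S x' → θ a x = θ a x') :
    ∑ x, p x * Real.log (fullCond p i x / θ (x i) x) =
      (∑ y, margS p S y *
        ∑ a, condP p i S y a * Real.log (condP p i S y a / θ a (fill S y))) +
      condEnt p i S - condEnt p i (Finset.univ.erase i) := by
  obtain ⟨hθpos, hθsum, hθupd⟩ := hθ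
  have hmargpos : ∀ x, 0 < marg p i x := fun x =>
    Finset.sum_pos (fun a _ => hppos _) Finset.univ_nonempty
  have hFC : ∀ x, 0 < fullCond p i x := fun x => div_pos (hppos x) (hmargpos x)
  have hratio : ∀ x, 0 < margS p (insert i S) (restr (insert i S) x) / margS p S (restr S x) :=
    fun x => div_pos (margS_pos p hppos _ _) (margS_pos p hppos _ _)
  have hA2 : (∑ y, margS p S y *
        ∑ a, condP p i S y a * Real.log (condP p i S y a / θ a (fill S y)))
      = (∑ x, p x * Real.log
          (margS p (insert i S) (restr (insert i S) x) / margS p S (restr S x)))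
        - ∑ x, p x * Real.log (θ (x i) x) := by
    rw [stepA p hppos i S hiS θ hθS, ← Finset.sum_sub_distrib]
    refine Finset.sum_congr rfl fun x _ => ?_
    rw [Real.log_div (ne_of_gt (hratio x)) (ne_of_gt (hθpos _ _)), mul_sub]
  have hE : condEnt p i (Finset.univ.erase i) = -∑ x, p x * Real.log (fullCond p i x) := by
    unfold condEnt
    congr 1
    refine Finset.sum_congr rfl fun x _ => ?_
    rw [condEnt_erase_aux p i x]
    rfl
  have hL : ∑ x, p x * Real.log (fullCond p i x / θ (x i) x)
      = (∑ x, p x * Real.log (fullCond p i x)) - ∑ x, p x * Real.log (θ (x i) x) := by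
    rw [← Finset.sum_sub_distrib]
    refine Finset.sum_congr rfl fun x _ => ?_
    rw [Real.log_div (ne_of_gt (hFC x)) (ne_of_gt (hθpos _ _)), mul_sub]
  have hS : condEnt p i S = -∑ x, p x * Real.log
      (margS p (insert i S) (restr (insert i S) x) / margS p S (restr S x)) := rfl
  rw [hL, hA2, hE, hS]
  ring
end

section
/- The full-conditional divergence is the Bregman divergence of the average negative conditional entropy: let c_i ≥ 0 with Σ_i c_i = 1, define f(p) = Σ_i c_i · Σ_x p(x)·log p(xᵢ|x₋ᵢ) for positive distributions p (so f(p) = −Σ_i c_i H_p(Xᵢ|X₋ᵢ)), and g_q(x) = Σ_i c_i·log q(xᵢ|x₋ᵢ). Then for all positive distributions p and q, FC(p‖q) = f(p) − f(q) − Σ_x ( p(x) − q(x) )·g_q(x). -/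
open Finset

variable {ι : Type} [Fintype ι] [DecidableEq ι] [Nonempty ι]
  {α : ι → Type} [∀ i, Fintype (α i)] [∀ i, DecidableEq (α i)] [∀ i, Nonempty (α i)]

/-- The full-conditional divergence
`FC(p‖q) = Σ_i c_i·Σ_x p(x)·log( p(xᵢ|x₋ᵢ)/q(xᵢ|x₋ᵢ) )`. -/
noncomputable def FC (c : ι → ℝ) (p q : (∀ j, α j) → ℝ) : ℝ :=
  ∑ i, c i * ∑ x, p x * Real.log (fullCond p i x / fullCond q i x)

/-- the full-conditional divergence is the Bregman divergence of
the average negative conditional entropy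
`f(p) = Σ_i c_i·Σ_x p(x)·log p(xᵢ|x₋ᵢ)`, with gradient term
`g_q(x) = Σ_i c_i·log q(xᵢ|x₋ᵢ)`:
`FC(p‖q) = f(p) − f(q) − Σ_x (p(x) − q(x))·g_q(x)`. -/
theorem FC_is_Bregman
    (c : ι → ℝ) (hc0 : ∀ i, 0 ≤ c i) (hc1 : ∑ i, c i = 1)
    (p q : (∀ j, α j) → ℝ) (hp : IsDist p) (hppos : ∀ x, 0 < p x)
    (hq : IsDist q) (hqpos : ∀ x, 0 < q x) :
    FC c p q =
      (∑ i, c i * ∑ x, p x * Real.log (fullCond p i x)) -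
      (∑ i, c i * ∑ x, q x * Real.log (fullCond q i x)) -
      ∑ x, (p x - q x) * (∑ i, c i * Real.log (fullCond q i x)) := by
  have hm : ∀ (r : (∀ j, α j) → ℝ), (∀ x, 0 < r x) → ∀ (i : ι) x, 0 < fullCond r i x := by
    intro r hr i x
    exact div_pos (hr x) (Finset.sum_pos (fun a _ => hr _) Finset.univ_nonempty)
  have h2 : ∑ x, (p x - q x) * (∑ i, c i * Real.log (fullCond q i x))
      = (∑ i, c i * ∑ x, p x * Real.log (fullCond q i x)) -
        (∑ i, c i * ∑ x, q x * Real.log (fullCond q i x)) := by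
    simp only [Finset.mul_sum]
    rw [← Finset.sum_sub_distrib, Finset.sum_comm]
    apply Finset.sum_congr rfl
    intro x _
    rw [← Finset.sum_sub_distrib]
    apply Finset.sum_congr rfl
    intro i _
    ring
  rw [h2]
  unfold FC
  rw [← Finset.sum_sub_distrib, ← Finset.sum_sub_distrib, ← Finset.sum_sub_distrib]
  apply Finset.sum_congr rfl
  intro i _
  rw [sub_sub_sub_cancel_right, ← mul_sub, ← Finset.sum_sub_distrib]
  congr 1
  apply Finset.sum_congr rfl
  intro x _
  rw [Real.log_div (hm p hppos i x).ne' (hm q hqpos i x).ne']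
  ring
end

section
/- Generalized-input version of Theorem 4: let p be a positive distribution, i ∈ ι, β a finite nonempty type, and f : X → β a function with f(x) depending only on the coordinates of x other than i (f(x) = f(x[i↦b]) for all b). Define θ̂(a,x) = p(a|f = f(x)) := ( Σ_{x' : f(x') = f(x), x'ᵢ = a} p(x') ) / ( Σ_{x' : f(x') = f(x)} p(x') ). Then for every CPT θ at node i with θ(a,x) depending only on f(x) (i.e. f(x) = f(x') implies θ(a,x) = θ(a,x') for all a), Σ_x p(x)·log( p(xᵢ|x₋ᵢ)/θ̂(xᵢ,x) ) ≤ Σ_x p(x)·log( p(xᵢ|x₋ᵢ)/θ(xᵢ,x) ), and the left-hand side equals H_p(Xᵢ|f(X)) − H_p(Xᵢ|X₋ᵢ), where H_p(Xᵢ|f(X)) = −Σ_x p(x)·log θ̂(xᵢ,x). -/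
open Finset

variable {ι : Type} [Fintype ι] [DecidableEq ι] [Nonempty ι]
  {α : ι → Type} [∀ i, Fintype (α i)] [∀ i, DecidableEq (α i)] [∀ i, Nonempty (α i)]

set_option linter.unusedSectionVars false

lemma key_sum (p : (∀ j, α j) → ℝ) (hp : ∑ x, p x = 1) (hppos : ∀ x, 0 < p x)
    (i : ι) {β : Type} [Fintype β] [DecidableEq β]
    (f : (∀ j, α j) → β) (hf : ∀ x (b : α i), f (Function.update x i b) = f x)
    (θ : α i → (∀ j, α j) → ℝ) (hθ1 : ∀ x, ∑ a, θ a x = 1)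
    (hθf : ∀ (a : α i) (x x' : ∀ j, α j), f x = f x' → θ a x = θ a x')
    (N D : (∀ j, α j) → ℝ)
    (hN : ∀ x, N x = ∑ x', if f x' = f x ∧ x' i = x i then p x' else 0)
    (hD : ∀ x, D x = ∑ x', if f x' = f x then p x' else 0) :
    ∑ x, p x * θ (x i) x * (D x / N x) = 1 := by
  have hNpos : ∀ x, 0 < N x := by
    intro x
    rw [hN]
    refine Finset.sum_pos' (fun y _ => ?_) ⟨x, Finset.mem_univ x, ?_⟩
    · split_ifs
      · exact (hppos y).le
      · exact le_refl 0
    · simpa using hppos x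
  have hNc : ∀ x y, f x = f y → x i = y i → N x = N y := by
    intro x y h1 h2
    rw [hN, hN]
    exact Finset.sum_congr rfl fun z _ => by rw [h1, h2]
  have step1 : ∀ x, p x * θ (x i) x * (D x / N x)
      = ∑ y, if f y = f x then p y * θ (x i) x * p x / N x else 0 := by
    intro x
    rw [hD, Finset.sum_div, Finset.mul_sum]
    refine Finset.sum_congr rfl fun y _ => ?_
    split_ifs with h
    · ring
    · simp
  have step2 : ∀ y, p y = ∑ a, ∑ x, if f x = f y ∧ x i = a
      then p y * θ a y * p x / N (Function.update y i a) else 0 := by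
    intro y
    have hNs : ∀ a : α i, (∑ x, if f x = f y ∧ x i = a then p x else 0)
        = N (Function.update y i a) := by
      intro a
      rw [hN]
      refine Finset.sum_congr rfl fun z _ => ?_
      rw [hf, Function.update_self]
    calc p y = ∑ a, p y * θ a y := by rw [← Finset.mul_sum, hθ1, mul_one]
      _ = ∑ a, ∑ x, if f x = f y ∧ x i = a
            then p y * θ a y * p x / N (Function.update y i a) else 0 := by
          refine Finset.sum_congr rfl fun a _ => ?_
          have hNe : N (Function.update y i a) ≠ 0 := (hNpos _).ne'
          have h1 : (∑ x, if f x = f y ∧ x i = a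
              then p y * θ a y * p x / N (Function.update y i a) else 0)
              = (p y * θ a y / N (Function.update y i a))
                * ∑ x, (if f x = f y ∧ x i = a then p x else 0) := by
            rw [Finset.mul_sum]
            refine Finset.sum_congr rfl fun z _ => ?_
            split_ifs with h
            · ring
            · ring
          rw [h1, hNs, div_mul_cancel₀ _ hNe]
  have step3 : ∀ x y, (∑ a, if f x = f y ∧ x i = a
      then p y * θ a y * p x / N (Function.update y i a) else 0)
      = (if f y = f x then p y * θ (x i) x * p x / N x else 0) := by
    intro x y
    by_cases h : f x = f y
    · rw [if_pos h.symm]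
      have h2 : (∑ a, if f x = f y ∧ x i = a
          then p y * θ a y * p x / N (Function.update y i a) else 0)
          = ∑ a, if x i = a then p y * θ a y * p x / N (Function.update y i a) else 0 :=
        Finset.sum_congr rfl fun a _ => by simp [h]
      rw [h2, Finset.sum_ite_eq, if_pos (Finset.mem_univ _),
        hθf (x i) y x h.symm,
        hNc (Function.update y i (x i)) x ((hf y (x i)).trans h.symm)
          (by rw [Function.update_self])]
    · rw [if_neg (fun hh => h hh.symm)]
      exact Finset.sum_eq_zero fun a _ => if_neg (fun hh => h hh.1)
  calc ∑ x, p x * θ (x i) x * (D x / N x)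
      = ∑ x, ∑ y, if f y = f x then p y * θ (x i) x * p x / N x else 0 :=
        Finset.sum_congr rfl fun x _ => step1 x
    _ = ∑ x, ∑ y, ∑ a, if f x = f y ∧ x i = a
          then p y * θ a y * p x / N (Function.update y i a) else 0 :=
        Finset.sum_congr rfl fun x _ => Finset.sum_congr rfl fun y _ => (step3 x y).symm
    _ = ∑ y, ∑ x, ∑ a, if f x = f y ∧ x i = a
          then p y * θ a y * p x / N (Function.update y i a) else 0 := Finset.sum_comm
    _ = ∑ y, ∑ a, ∑ x, if f x = f y ∧ x i = a
          then p y * θ a y * p x / N (Function.update y i a) else 0 :=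
        Finset.sum_congr rfl fun y _ => Finset.sum_comm
    _ = ∑ y, p y := Finset.sum_congr rfl fun y _ => (step2 y).symm
    _ = 1 := hp

/-- generalized-input version of Theorem 4: for a generalized
input `f : X → β` not depending on coordinate `i`, the CPT
`θ̂(a,x) = p(a|f = f(x))` minimizes `Σ_x p(x)·log( p(xᵢ|x₋ᵢ)/θ(xᵢ,x) )` among CPTs
at node `i` depending only on `f(x)`, and the minimum value equals
`H_p(Xᵢ|f(X)) − H_p(Xᵢ|X₋ᵢ)` where `H_p(Xᵢ|f(X)) = −Σ_x p(x)·log θ̂(xᵢ,x)` and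
`H_p(Xᵢ|X₋ᵢ) = −Σ_x p(x)·log p(xᵢ|x₋ᵢ)`. -/
theorem generalized_input_optimal_CPT
    (p : (∀ j, α j) → ℝ) (hp : IsDist p) (hppos : ∀ x, 0 < p x)
    (i : ι) (β : Type) [Fintype β] [DecidableEq β] [Nonempty β]
    (f : (∀ j, α j) → β) (hf : ∀ x (b : α i), f (Function.update x i b) = f x) :
    (∀ θ : α i → (∀ j, α j) → ℝ, IsCPT i θ →
      (∀ (a : α i) (x x' : ∀ j, α j), f x = f x' → θ a x = θ a x') →
      ∑ x, p x * Real.log (fullCond p i x /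
          ((∑ x', if f x' = f x ∧ x' i = (x i) then p x' else 0) /
            (∑ x', if f x' = f x then p x' else 0))) ≤
        ∑ x, p x * Real.log (fullCond p i x / θ (x i) x)) ∧
    ∑ x, p x * Real.log (fullCond p i x /
        ((∑ x', if f x' = f x ∧ x' i = (x i) then p x' else 0) /
          (∑ x', if f x' = f x then p x' else 0))) =
      (-∑ x, p x * Real.log
          ((∑ x', if f x' = f x ∧ x' i = (x i) then p x' else 0) /
            (∑ x', if f x' = f x then p x' else 0))) -
      (-∑ x, p x * Real.log (fullCond p i x)) := by
  have hfc : ∀ x, 0 < fullCond p i x := by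
    intro x
    have hm : 0 < marg p i x :=
      Finset.sum_pos (fun a _ => hppos _) Finset.univ_nonempty
    exact div_pos (hppos x) hm
  have hApos : ∀ x, 0 < ∑ x', if f x' = f x ∧ x' i = x i then p x' else 0 := by
    intro x
    refine Finset.sum_pos' (fun y _ => ?_) ⟨x, Finset.mem_univ x, ?_⟩
    · split_ifs
      · exact (hppos y).le
      · exact le_refl 0
    · simpa using hppos x
  have hBpos : ∀ x, 0 < ∑ x', if f x' = f x then p x' else 0 := by
    intro x
    refine Finset.sum_pos' (fun y _ => ?_) ⟨x, Finset.mem_univ x, ?_⟩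
    · split_ifs
      · exact (hppos y).le
      · exact le_refl 0
    · simpa using hppos x
  have hRpos : ∀ x, 0 < (∑ x', if f x' = f x ∧ x' i = x i then p x' else 0) /
      (∑ x', if f x' = f x then p x' else 0) := fun x => div_pos (hApos x) (hBpos x)
  have hsplit1 : ∑ x, p x * Real.log (fullCond p i x /
        ((∑ x', if f x' = f x ∧ x' i = (x i) then p x' else 0) /
          (∑ x', if f x' = f x then p x' else 0)))
      = (∑ x, p x * Real.log (fullCond p i x)) -
        ∑ x, p x * Real.log ((∑ x', if f x' = f x ∧ x' i = (x i) then p x' else 0) /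
          (∑ x', if f x' = f x then p x' else 0)) := by
    rw [← Finset.sum_sub_distrib]
    exact Finset.sum_congr rfl fun x _ => by
      rw [Real.log_div (hfc x).ne' (hRpos x).ne', mul_sub]
  constructor
  · intro θ hθ hθf
    have hθpos := hθ.1
    have hsplit2 : ∑ x, p x * Real.log (fullCond p i x / θ (x i) x)
        = (∑ x, p x * Real.log (fullCond p i x)) - ∑ x, p x * Real.log (θ (x i) x) := by
      rw [← Finset.sum_sub_distrib]
      exact Finset.sum_congr rfl fun x _ => by
        rw [Real.log_div (hfc x).ne' (hθpos _ _).ne', mul_sub]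
    rw [hsplit1, hsplit2]
    apply sub_le_sub_left
    have key : ∑ x, p x * θ (x i) x *
        ((∑ x', if f x' = f x then p x' else 0) /
          (∑ x', if f x' = f x ∧ x' i = x i then p x' else 0)) = 1 :=
      key_sum p hp.2 hppos i f hf θ hθ.2.1 hθf _ _ (fun _ => rfl) (fun _ => rfl)
    have hmain : ∑ x, (p x * Real.log (θ (x i) x) -
        p x * Real.log ((∑ x', if f x' = f x ∧ x' i = x i then p x' else 0) /
          (∑ x', if f x' = f x then p x' else 0))) ≤ 0 := by
      calc ∑ x, (p x * Real.log (θ (x i) x) -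
            p x * Real.log ((∑ x', if f x' = f x ∧ x' i = x i then p x' else 0) /
              (∑ x', if f x' = f x then p x' else 0)))
          = ∑ x, p x * Real.log (θ (x i) x /
              ((∑ x', if f x' = f x ∧ x' i = x i then p x' else 0) /
                (∑ x', if f x' = f x then p x' else 0))) := by
            refine Finset.sum_congr rfl fun x _ => ?_
            rw [Real.log_div (hθpos _ _).ne' (hRpos x).ne', mul_sub]
        _ ≤ ∑ x, p x * (θ (x i) x /
              ((∑ x', if f x' = f x ∧ x' i = x i then p x' else 0) /
                (∑ x', if f x' = f x then p x' else 0)) - 1) := by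
            refine Finset.sum_le_sum fun x _ => ?_
            exact mul_le_mul_of_nonneg_left
              (Real.log_le_sub_one_of_pos (div_pos (hθpos _ _) (hRpos x))) (hppos x).le
        _ = ∑ x, (p x * θ (x i) x *
              ((∑ x', if f x' = f x then p x' else 0) /
                (∑ x', if f x' = f x ∧ x' i = x i then p x' else 0)) - p x) := by
            refine Finset.sum_congr rfl fun x _ => ?_
            rw [div_div_eq_mul_div]
            ring
        _ = 1 - 1 := by rw [Finset.sum_sub_distrib, key, hp.2]
        _ = 0 := sub_self 1
    rw [Finset.sum_sub_distrib] at hmain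
    linarith
  · rw [hsplit1]
    ring
end
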